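/- Let U, α, and the planar system be as above, with U_min ≤ U(ϑ) ≤ U_max. Suppose (ϑ(τ), φ(τ)) is a solution on which v(τ) = √(U(ϑ)) cos(φ−ϑ) strictly increases from −√(U_min) to √(U_min) while ϑ is strictly monotone increasing from ξ⁻ to ϑ̂, so that v can be written as a function of ϑ with dv/dϑ = ((2−α)/2) √(U(ϑ) − v²). Then the total angular variation satisfies (4/(2−α)) arcsin√(U_min/U_max) ≤ ϑ̂ − ξ⁻ ≤ 2π/(2−α). -/

import Mathlib

theorem stmt_11 (α Umin Umax ξ θhat : ℝ) (hα : α ∈ Set.Ioo (0 : ℝ) 2)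
    (hUmin : 0 < Umin) (hUmm : Umin ≤ Umax) (hlt : ξ < θhat)
    (U v : ℝ → ℝ)
    (hU : ∀ x, Umin ≤ U x ∧ U x ≤ Umax)
    (hv : ∀ x ∈ Set.Icc ξ θhat,
      HasDerivAt v (((2 - α) / 2) * Real.sqrt (U x - (v x) ^ 2)) x)
    (hmono : StrictMonoOn v (Set.Icc ξ θhat))
    (hrange : ∀ x ∈ Set.Icc ξ θhat, (v x) ^ 2 ≤ U x)
    (hva : v ξ = -Real.sqrt Umin) (hvb : v θhat = Real.sqrt Umin) :
    (4 / (2 - α)) * Real.arcsin (Real.sqrt (Umin / Umax)) ≤ θhat - ξ ∧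
      θhat - ξ ≤ 2 * Real.pi / (2 - α) := by
  obtain ⟨hα0, hα2⟩ := hα
  set c : ℝ := (2 - α) / 2 with hc_def
  have hc : 0 < c := by rw [hc_def]; linarith
  have hUmax : 0 < Umax := lt_of_lt_of_le hUmin hUmm
  have hsm : 0 < Real.sqrt Umin := Real.sqrt_pos.2 hUmin
  have hsM : 0 < Real.sqrt Umax := Real.sqrt_pos.2 hUmax
  have hmemξ : ξ ∈ Set.Icc ξ θhat := ⟨le_refl _, hlt.le⟩
  have hmemθ : θhat ∈ Set.Icc ξ θhat := ⟨hlt.le, le_refl _⟩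
  -- interior values of v are strictly between -√Umin and √Umin
  have hvx_lt : ∀ x ∈ Set.Ioo ξ θhat, (v x) ^ 2 < Umin := by
    intro x hx
    have h1 : v ξ < v x := hmono hmemξ ⟨hx.1.le, hx.2.le⟩ hx.1
    have h2 : v x < v θhat := hmono ⟨hx.1.le, hx.2.le⟩ hmemθ hx.2
    rw [hva] at h1; rw [hvb] at h2
    have := sq_lt_sq' (by linarith) h2
    calc (v x)^2 < (Real.sqrt Umin)^2 := this
      _ = Umin := Real.sq_sqrt hUmin.le
  -- general derivative computation for arcsin (v x / √W)
  have key : ∀ W : ℝ, 0 < W → ∀ x ∈ Set.Ioo ξ θhat, (v x)^2 < W →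
      HasDerivAt (fun y => Real.arcsin (v y / Real.sqrt W))
        (c * Real.sqrt (U x - (v x)^2) / Real.sqrt (W - (v x)^2)) x := by
    intro W hW x hx hvW
    have hsW : 0 < Real.sqrt W := Real.sqrt_pos.2 hW
    have hWsq : (Real.sqrt W)^2 = W := Real.sq_sqrt hW.le
    have habs : |v x| < Real.sqrt W := by
      rw [← Real.sqrt_sq_eq_abs]
      exact Real.sqrt_lt_sqrt (sq_nonneg _) hvW
    have hd1 : v x / Real.sqrt W ≠ -1 := by
      have := (abs_lt.1 habs).1
      intro h; rw [div_eq_iff hsW.ne'] at h; simp at h; linarith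
    have hd2 : v x / Real.sqrt W ≠ 1 := by
      have := (abs_lt.1 habs).2
      intro h; rw [div_eq_iff hsW.ne'] at h; simp at h; linarith
    have hdiv : HasDerivAt (fun y => v y / Real.sqrt W)
        ((c * Real.sqrt (U x - (v x)^2)) / Real.sqrt W) x :=
      (hv x ⟨hx.1.le, hx.2.le⟩).div_const _
    have harc := (Real.hasDerivAt_arcsin hd1 hd2).comp x hdiv
    convert harc using 1
    case e'_4 => rfl
    case e'_5 => rfl
    case e'_8 => rfl
    have hApos : 0 < 1 - (v x / Real.sqrt W)^2 := by
      have : (v x / Real.sqrt W)^2 < 1 := by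
        rw [div_pow, hWsq]
        exact (div_lt_one hW).2 hvW
      linarith
    have hprod : Real.sqrt (1 - (v x / Real.sqrt W)^2) * Real.sqrt W
        = Real.sqrt (W - (v x)^2) := by
      rw [← Real.sqrt_mul hApos.le]
      congr 1
      field_simp
      rw [hWsq]; ring
    rw [one_div, inv_mul_eq_div, div_div, mul_comm (Real.sqrt W), hprod]
  -- continuity of v, and of the arcsin compositions
  have hvcont : ContinuousOn v (Set.Icc ξ θhat) := fun x hx =>
    (hv x hx).continuousAt.continuousWithinAt
  have hcont : ∀ W : ℝ, ContinuousOn (fun y => Real.arcsin (v y / Real.sqrt W))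
      (Set.Icc ξ θhat) := fun W =>
    Real.continuous_arcsin.comp_continuousOn (hvcont.div_const _)
  have hint : interior (Set.Icc ξ θhat) = Set.Ioo ξ θhat := interior_Icc
  constructor
  · -- lower bound, use arcsin (v / √Umax)
    have hdiff : DifferentiableOn ℝ (fun y => Real.arcsin (v y / Real.sqrt Umax))
        (interior (Set.Icc ξ θhat)) := by
      rw [hint]
      intro x hx
      exact (key Umax hUmax x hx (lt_of_lt_of_le (hvx_lt x hx) hUmm)).differentiableAt.differentiableWithinAt
    have hbound : ∀ x ∈ interior (Set.Icc ξ θhat),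
        deriv (fun y => Real.arcsin (v y / Real.sqrt Umax)) x ≤ c := by
      rw [hint]
      intro x hx
      have hk := key Umax hUmax x hx (lt_of_lt_of_le (hvx_lt x hx) hUmm)
      rw [hk.deriv]
      have hD : 0 < Real.sqrt (Umax - (v x)^2) :=
        Real.sqrt_pos.2 (by linarith [lt_of_lt_of_le (hvx_lt x hx) hUmm])
      rw [div_le_iff₀ hD]
      have hN : Real.sqrt (U x - (v x)^2) ≤ Real.sqrt (Umax - (v x)^2) :=
        Real.sqrt_le_sqrt (by linarith [(hU x).2])
      nlinarith [Real.sqrt_nonneg (U x - (v x)^2)]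
    have hmvt := (convex_Icc ξ θhat).image_sub_le_mul_sub_of_deriv_le
      (hcont Umax) hdiff hbound ξ hmemξ θhat hmemθ hlt.le
    simp only [hva, hvb, neg_div, Real.arcsin_neg, sub_neg_eq_add] at hmvt
    rw [Real.sqrt_div hUmin.le]
    rw [div_mul_eq_mul_div, div_le_iff₀ (by linarith : (0:ℝ) < 2 - α)]
    rw [hc_def] at hmvt
    linarith
  · -- upper bound, use arcsin (v / √Umin)
    have hdiff : DifferentiableOn ℝ (fun y => Real.arcsin (v y / Real.sqrt Umin))
        (interior (Set.Icc ξ θhat)) := by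
      rw [hint]
      intro x hx
      exact (key Umin hUmin x hx (hvx_lt x hx)).differentiableAt.differentiableWithinAt
    have hbound : ∀ x ∈ interior (Set.Icc ξ θhat),
        c ≤ deriv (fun y => Real.arcsin (v y / Real.sqrt Umin)) x := by
      rw [hint]
      intro x hx
      have hk := key Umin hUmin x hx (hvx_lt x hx)
      rw [hk.deriv]
      have hD : 0 < Real.sqrt (Umin - (v x)^2) :=
        Real.sqrt_pos.2 (by linarith [hvx_lt x hx])
      rw [le_div_iff₀ hD]
      have hN : Real.sqrt (Umin - (v x)^2) ≤ Real.sqrt (U x - (v x)^2) :=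
        Real.sqrt_le_sqrt (by linarith [(hU x).1])
      nlinarith [Real.sqrt_nonneg (Umin - (v x)^2)]
    have hmvt := (convex_Icc ξ θhat).mul_sub_le_image_sub_of_le_deriv
      (hcont Umin) hdiff hbound ξ hmemξ θhat hmemθ hlt.le
    simp only [hva, hvb, neg_div, Real.arcsin_neg, sub_neg_eq_add,
      div_self hsm.ne', Real.arcsin_one] at hmvt
    rw [le_div_iff₀ (by linarith : (0:ℝ) < 2 - α)]
    rw [hc_def] at hmvt
    linarith
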